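/- Let α ∈ ℤ_p be a p-adic integer with standard expansion α = a_0 + a_1 p + a_2 p² + ⋯, a_i ∈ {0,…,p−1}, and a_0 ≠ 0. Then for every n ≥ 1 the p-adic valuation of the Pochhammer symbol (α)_n = α(α+1)⋯(α+n−1) is given by v_p((α)_n) = Σ_{k≥1} ⌊(n−1 + a_0 + a_1 p + ⋯ + a_{k−1} p^{k−1}) / p^k⌋. -/

import Mathlib

open scoped Classical


section aux
variable {p : ℕ} [hp : Fact p.Prime]

lemma my_val_mul {x y : ℤ_[p]} (hx : x ≠ 0) (hy : y ≠ 0) :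
    (x*y).valuation = x.valuation + y.valuation := by
  exact PadicInt.valuation_mul hx hy

lemma my_val_prod {s : Finset ℕ} {f : ℕ → ℤ_[p]} (h : ∀ i ∈ s, f i ≠ 0) :
    (∏ i ∈ s, f i).valuation = ∑ i ∈ s, (f i).valuation := by
  induction s using Finset.cons_induction with
  | empty => simp [PadicInt.valuation_one]
  | cons a s ha ih =>
    rw [Finset.prod_cons, Finset.sum_cons,
      my_val_mul (h a (Finset.mem_cons_self a s))
        (Finset.prod_ne_zero_iff.mpr fun i hi => h i (Finset.mem_cons_of_mem hi)),
      ih fun i hi => h i (Finset.mem_cons_of_mem hi)]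

lemma my_ind_eq {x : ℤ_[p]} (hx : x ≠ 0) :
    (fun k : ℕ => if (p:ℤ_[p])^(k+1) ∣ x then (1:ℤ) else 0)
      = fun k => if k < x.valuation then 1 else 0 := by
  have hv : (x.valuation : ℤ) = ((x.valuation : ℕ) : ℤ) := rfl
  funext k
  have hiff : (p:ℤ_[p])^(k+1) ∣ x ↔ k < x.valuation := by
    rw [← Ideal.mem_span_singleton, PadicInt.mem_span_pow_iff_le_valuation x hx]
    exact_mod_cast Nat.succ_le_iff
  by_cases h : k < x.valuation <;> simp [hiff, h]

lemma my_summable {x : ℤ_[p]} (hx : x ≠ 0) :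
    Summable (fun k : ℕ => if (p:ℤ_[p])^(k+1) ∣ x then (1:ℤ) else 0) := by
  rw [my_ind_eq hx]
  exact summable_of_ne_finset_zero (s := Finset.range x.valuation)
    (by intro k hk; simp at hk; simp [hk])

lemma my_val_tsum {x : ℤ_[p]} (hx : x ≠ 0) :
    x.valuation = ∑' k : ℕ, (if (p:ℤ_[p])^(k+1) ∣ x then (1:ℤ) else 0) := by
  have hv : (x.valuation : ℤ) = ((x.valuation : ℕ) : ℤ) := rfl
  rw [my_ind_eq hx, tsum_eq_sum (s := Finset.range x.valuation)
    (by intro k hk; simp at hk; simp [hk]),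
    Finset.sum_ite_of_true (fun k hk => Finset.mem_range.mp hk)]
  simp only [Finset.sum_const, Finset.card_range, nsmul_eq_mul, mul_one]

lemma my_count (q c : ℕ) (hc : 1 ≤ c) (n : ℕ) :
    (∑ i ∈ Finset.range n, if q ∣ (i+c) then (1:ℤ) else 0)
      = (((n+c-1)/q : ℕ) : ℤ) - (((c-1)/q : ℕ) : ℤ) := by
  induction n with
  | zero => simp
  | succ n ih =>
    rw [Finset.sum_range_succ, ih]
    have h1 : n + 1 + c - 1 = (n + c - 1) + 1 := by omega
    have h2 : n + c - 1 + 1 = n + c := by omega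
    rw [h1, Nat.succ_div, h2]
    push_cast [apply_ite (fun t : ℕ => (t:ℤ))]
    ring

lemma my_dvd_iff (α : ℤ_[p]) (K i : ℕ) :
    (p:ℤ_[p])^K ∣ (α + (i:ℤ_[p])) ↔ p^K ∣ (i + α.appr K) := by
  have hs : (p:ℤ_[p])^K ∣ (α - (α.appr K : ℤ_[p])) :=
    Ideal.mem_span_singleton.mp (α.appr_spec K)
  have heq : α + (i:ℤ_[p]) = (α - (α.appr K : ℤ_[p])) + (((i + α.appr K : ℕ) : ℤ) : ℤ_[p]) := by
    push_cast; ring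
  rw [heq, dvd_add_right hs, PadicInt.pow_p_dvd_int_iff]
  exact_mod_cast Iff.rfl

lemma my_appr_ne (α : ℤ_[p]) (h0 : α.appr 1 ≠ 0) (K : ℕ) : α.appr (K+1) ≠ 0 := by
  intro h
  have h1 : (p:ℤ_[p])^(K+1) ∣ α := by
    have := Ideal.mem_span_singleton.mp (α.appr_spec (K+1)); rwa [h, Nat.cast_zero, sub_zero] at this
  have h2 : (p:ℤ_[p])^1 ∣ α := dvd_trans (pow_dvd_pow _ (Nat.succ_le_succ (Nat.zero_le K))) h1
  have h3 : (p:ℤ_[p])^1 ∣ ((α.appr 1 : ℤ) : ℤ_[p]) := by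
    have hs : (p:ℤ_[p])^1 ∣ (α - (α.appr 1 : ℤ_[p])) :=
      Ideal.mem_span_singleton.mp (α.appr_spec 1)
    have : ((α.appr 1 : ℤ) : ℤ_[p]) = α - (α - (α.appr 1 : ℤ_[p])) := by push_cast; ring
    rw [this]
    exact dvd_sub h2 hs
  rw [PadicInt.pow_p_dvd_int_iff, pow_one] at h3
  have h4 : p ∣ α.appr 1 := by exact_mod_cast h3
  have := α.appr_lt 1
  rw [pow_one] at this
  exact h0 (Nat.eq_zero_of_dvd_of_lt h4 this)
end aux

/-- Let `α ∈ ℤ_p` with standard digit expansion `α = a_0 + a_1 p + a_2 p² + ⋯` and `a_0 ≠ 0`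
(i.e. `α.appr 1 ≠ 0`). Then for every `n ≥ 1` (such that the Pochhammer product
`(α)_n = α(α+1)⋯(α+n−1)` is nonzero, so that its valuation is finite), one has
`v_p((α)_n) = Σ_{k≥1} ⌊(n−1 + α_k)/p^k⌋`, where `α_k = a_0 + ⋯ + a_{k−1}p^{k−1} = α.appr k`.
The sum has only finitely many nonzero terms. -/
theorem stmt2 (p : ℕ) [Fact p.Prime] (α : ℤ_[p]) (h0 : α.appr 1 ≠ 0) (n : ℕ) (hn : 1 ≤ n)
    (hne : (∏ i ∈ Finset.range n, (α + (i : ℤ_[p]))) ≠ 0) :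
    (∏ i ∈ Finset.range n, (α + (i : ℤ_[p]))).valuation =
      ∑' k : ℕ, (((n - 1 + α.appr (k + 1)) / p ^ (k + 1) : ℕ) : ℤ) := by
  have hfac : ∀ i ∈ Finset.range n, (α + (i:ℤ_[p])) ≠ 0 := Finset.prod_ne_zero_iff.mp hne
  rw [my_val_prod hfac, Nat.cast_sum]
  rw [Finset.sum_congr rfl fun i hi => my_val_tsum (hfac i hi)]
  rw [← Summable.tsum_finsetSum fun i hi => my_summable (hfac i hi)]
  refine tsum_congr fun k => ?_
  set c := α.appr (k+1) with hcdef
  have hc : 1 ≤ c := Nat.one_le_iff_ne_zero.mpr (my_appr_ne α h0 k)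
  have hstep : ∀ i ∈ Finset.range n,
      (if (p:ℤ_[p])^(k+1) ∣ (α + (i:ℤ_[p])) then (1:ℤ) else 0)
        = if p^(k+1) ∣ (i + c) then (1:ℤ) else 0 := by
    intro i _
    exact if_congr (my_dvd_iff α (k+1) i) rfl rfl
  rw [Finset.sum_congr rfl hstep, my_count (p^(k+1)) c hc n]
  have hlt : c - 1 < p^(k+1) := lt_of_le_of_lt (Nat.sub_le _ _) (α.appr_lt (k+1))
  rw [Nat.div_eq_of_lt hlt]
  have : n + c - 1 = n - 1 + c := by omega
  rw [this]
  simp
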